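/- For integers 1 ≤ r < q, real Δ > 0, and any real interval I of length 2Δqr, the number of pairs (a,b) with 1 ≤ a ≤ q, 1 ≤ b ≤ r, gcd(a,q)=1, gcd(b,r)=1, and ar − bq ∈ I is at most (2Δqr/gcd(q,r) + 1) · φ(gcd(q,r)). -/

import Mathlib

open Finset

private lemma isUnit_prod' {M N : Type*} [Monoid M] [Monoid N] {x : M × N} :
    IsUnit x ↔ IsUnit x.1 ∧ IsUnit x.2 := by
  constructor
  · intro h
    exact ⟨h.map (MonoidHom.fst M N), h.map (MonoidHom.snd M N)⟩
  · rintro ⟨⟨u, hu⟩, ⟨v, hv⟩⟩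
    refine ⟨⟨(↑u, ↑v), (↑u⁻¹, ↑v⁻¹), ?_, ?_⟩, ?_⟩
    · ext <;> simp
    · ext <;> simp
    · simp [Prod.ext_iff, ← hu, ← hv]

private lemma isUnit_ringEquiv' {R S : Type*} [Ring R] [Ring S] (e : R ≃+* S) {x : R} :
    IsUnit (e x) ↔ IsUnit x := by
  constructor
  · intro h
    have := h.map e.symm.toRingHom
    simpa using this
  · intro h
    exact h.map e.toRingHom

private lemma card_affine_unit_le {g : ℕ} [NeZero g] (α β : ZMod g) (hα : IsUnit α)
    (Q : ZMod g → Prop) :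
    Nat.card {w : ZMod g // IsUnit (α * w + β) ∧ Q w} ≤ g.totient := by
  have hinj : Function.Injective
      (fun w : {w : ZMod g // IsUnit (α * w + β) ∧ Q w} => (w.2.1.unit : (ZMod g)ˣ)) := by
    intro w w' h
    have h2 : α * w.1 + β = α * w'.1 + β := by
      have := congrArg (Units.val) h
      simpa [IsUnit.unit_spec] using this
    have h3 : α * (w.1 : ZMod g) = α * w'.1 := by
      exact add_right_cancel h2
    exact Subtype.ext (hα.mul_left_cancel h3)
  calc Nat.card {w : ZMod g // IsUnit (α * w + β) ∧ Q w}
      ≤ Nat.card (ZMod g)ˣ := Nat.card_le_card_of_injective _ hinj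
    _ = g.totient := by rw [Nat.card_eq_fintype_card, ZMod.card_units_eq_totient]

private lemma crux (g : ℕ) (α β γ δ : ℤ) (hco : IsCoprime α γ) (hg : g ≠ 0) :
    Nat.card {w : ZMod g // IsUnit ((α : ZMod g) * w + (β : ZMod g)) ∧
      IsUnit ((γ : ZMod g) * w + (δ : ZMod g))} ≤ g.totient := by
  induction g using Nat.recOnPosPrimePosCoprime with
  | zero => exact absurd rfl hg
  | one =>
    calc Nat.card {w : ZMod 1 // IsUnit ((α : ZMod 1) * w + (β : ZMod 1)) ∧
          IsUnit ((γ : ZMod 1) * w + (δ : ZMod 1))}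
        ≤ Nat.card (ZMod 1) := Nat.card_le_card_of_injective Subtype.val Subtype.val_injective
      _ = 1 := by simp [Nat.card_eq_fintype_card]
      _ = Nat.totient 1 := Nat.totient_one.symm
  | prime_pow p n hp hn =>
    have pp : p.Prime := hp
    haveI : NeZero (p ^ n) := ⟨hg⟩
    have key : ∀ x : ℤ, ¬ (p : ℤ) ∣ x → IsUnit ((x : ZMod (p ^ n))) := by
      intro x hx
      have h1 : ¬ p ∣ x.natAbs := by rwa [← Int.natCast_dvd]
      have h2 : (x.natAbs).Coprime (p ^ n) :=
        Nat.Coprime.symm (Nat.Coprime.pow_left n ((Nat.Prime.coprime_iff_not_dvd pp).2 h1))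
      have h3 : IsUnit ((x.natAbs : ℕ) : ZMod (p ^ n)) := (ZMod.isUnit_iff_coprime _ _).2 h2
      rcases Int.natAbs_eq x with h | h
      · rw [h, Int.cast_natCast]; exact h3
      · rw [h, Int.cast_neg, Int.cast_natCast]; exact h3.neg
    have hor : ¬ (p : ℤ) ∣ α ∨ ¬ (p : ℤ) ∣ γ := by
      by_contra hcon
      push_neg at hcon
      have hu := hco.isUnit_of_dvd' hcon.1 hcon.2
      rw [Int.isUnit_iff] at hu
      have h2 := pp.two_le
      rcases hu with h | h
      · have : p = 1 := by exact_mod_cast h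
        omega
      · have : (0 : ℤ) ≤ p := by positivity
        omega
    rcases hor with h | h
    · exact card_affine_unit_le _ _ (key α h) _
    · calc Nat.card {w : ZMod (p ^ n) // IsUnit ((α : ZMod (p ^ n)) * w + (β : ZMod (p ^ n))) ∧
            IsUnit ((γ : ZMod (p ^ n)) * w + (δ : ZMod (p ^ n)))}
          = Nat.card {w : ZMod (p ^ n) // IsUnit ((γ : ZMod (p ^ n)) * w + (δ : ZMod (p ^ n))) ∧
            IsUnit ((α : ZMod (p ^ n)) * w + (β : ZMod (p ^ n)))} :=
            Nat.card_congr (Equiv.subtypeEquivRight (fun w => and_comm))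
        _ ≤ (p ^ n).totient := card_affine_unit_le _ _ (key γ h) _
  | coprime a b ha hb hab iha ihb =>
    have ha0 : a ≠ 0 := by omega
    have hb0 : b ≠ 0 := by omega
    haveI : NeZero a := ⟨ha0⟩
    haveI : NeZero b := ⟨hb0⟩
    haveI : NeZero (a * b) := ⟨hg⟩
    let e := ZMod.chineseRemainder hab
    have hsplit : ∀ x : ZMod (a * b), IsUnit x ↔ IsUnit (e x).1 ∧ IsUnit (e x).2 :=
      fun x => (isUnit_ringEquiv' e).symm.trans isUnit_prod'
    have hfst : ∀ c : ℤ, ((c : ℤ) : ZMod a × ZMod b).1 = (c : ZMod a) := fun c => rfl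
    have hsnd : ∀ c : ℤ, ((c : ℤ) : ZMod a × ZMod b).2 = (c : ZMod b) := fun c => rfl
    have hiff : ∀ w : ZMod (a * b),
        (IsUnit ((α : ZMod (a * b)) * w + (β : ZMod (a * b))) ∧
          IsUnit ((γ : ZMod (a * b)) * w + (δ : ZMod (a * b)))) ↔
        ((IsUnit ((α : ZMod a) * (e w).1 + (β : ZMod a)) ∧
          IsUnit ((γ : ZMod a) * (e w).1 + (δ : ZMod a))) ∧
         (IsUnit ((α : ZMod b) * (e w).2 + (β : ZMod b)) ∧
          IsUnit ((γ : ZMod b) * (e w).2 + (δ : ZMod b)))) := by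
      intro w
      rw [hsplit ((α : ZMod (a * b)) * w + (β : ZMod (a * b))),
        hsplit ((γ : ZMod (a * b)) * w + (δ : ZMod (a * b)))]
      simp only [map_add, map_mul, map_intCast, Prod.fst_add, Prod.snd_add, Prod.fst_mul,
        Prod.snd_mul, hfst, hsnd]
      tauto
    calc Nat.card {w : ZMod (a * b) // IsUnit ((α : ZMod (a * b)) * w + (β : ZMod (a * b))) ∧
          IsUnit ((γ : ZMod (a * b)) * w + (δ : ZMod (a * b)))}
        = Nat.card {x : ZMod a × ZMod b //
            (IsUnit ((α : ZMod a) * x.1 + (β : ZMod a)) ∧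
              IsUnit ((γ : ZMod a) * x.1 + (δ : ZMod a))) ∧
            (IsUnit ((α : ZMod b) * x.2 + (β : ZMod b)) ∧
              IsUnit ((γ : ZMod b) * x.2 + (δ : ZMod b)))} :=
          Nat.card_congr (e.toEquiv.subtypeEquiv hiff)
      _ = Nat.card ({y : ZMod a // IsUnit ((α : ZMod a) * y + (β : ZMod a)) ∧
              IsUnit ((γ : ZMod a) * y + (δ : ZMod a))} ×
            {z : ZMod b // IsUnit ((α : ZMod b) * z + (β : ZMod b)) ∧
              IsUnit ((γ : ZMod b) * z + (δ : ZMod b))}) :=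
          Nat.card_congr (Equiv.subtypeProdEquivProd
            (p := fun y : ZMod a => IsUnit ((α : ZMod a) * y + (β : ZMod a)) ∧
              IsUnit ((γ : ZMod a) * y + (δ : ZMod a)))
            (q := fun z : ZMod b => IsUnit ((α : ZMod b) * z + (β : ZMod b)) ∧
              IsUnit ((γ : ZMod b) * z + (δ : ZMod b))))
      _ = Nat.card {y : ZMod a // IsUnit ((α : ZMod a) * y + (β : ZMod a)) ∧
              IsUnit ((γ : ZMod a) * y + (δ : ZMod a))} *
          Nat.card {z : ZMod b // IsUnit ((α : ZMod b) * z + (β : ZMod b)) ∧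
              IsUnit ((γ : ZMod b) * z + (δ : ZMod b))} := Nat.card_prod _ _
      _ ≤ a.totient * b.totient := Nat.mul_le_mul (iha ha0) (ihb hb0)
      _ = (a * b).totient := (Nat.totient_mul hab).symm

theorem stmt17 (q r : ℕ) (hr : 1 ≤ r) (hrq : r < q) (Δ : ℝ) (hΔ : 0 < Δ) (X : ℝ) :
    ((((Finset.Icc 1 q) ×ˢ (Finset.Icc 1 r)).filter (fun ab : ℕ × ℕ =>
        Nat.gcd ab.1 q = 1 ∧ Nat.gcd ab.2 r = 1 ∧
        ((ab.1 * r : ℕ) : ℝ) - ((ab.2 * q : ℕ) : ℝ) ∈ Set.Icc X (X + 2 * Δ * q * r))).card : ℝ)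
      ≤ (2 * Δ * q * r / (Nat.gcd q r : ℝ) + 1) * (Nat.totient (Nat.gcd q r) : ℝ) := by
  classical
  set g := Nat.gcd q r with hgdef
  have hq0 : 0 < q := by omega
  have hg0 : 0 < g := Nat.gcd_pos_of_pos_left r hq0
  haveI : NeZero g := ⟨hg0.ne'⟩
  have hgq : g ∣ q := Nat.gcd_dvd_left q r
  have hgr : g ∣ r := Nat.gcd_dvd_right q r
  set q' := q / g with hq'def
  set r' := r / g with hr'def
  have hq' : q' * g = q := Nat.div_mul_cancel hgq
  have hr' : r' * g = r := Nat.div_mul_cancel hgr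
  have hq'0 : 0 < q' := Nat.div_pos (Nat.le_of_dvd hq0 hgq) hg0
  have hco : Nat.Coprime q' r' := Nat.coprime_div_gcd_div_gcd hg0
  have hq'z : (q' : ℤ) * g = q := by exact_mod_cast congrArg (Nat.cast (R := ℤ)) hq'
  have hr'z : (r' : ℤ) * g = r := by exact_mod_cast congrArg (Nat.cast (R := ℤ)) hr'
  obtain ⟨s, t, hst⟩ : ∃ s t : ℤ, (q' : ℤ) * s + (r' : ℤ) * t = 1 := by
    refine ⟨Nat.gcdA q' r', Nat.gcdB q' r', ?_⟩
    have h := Nat.gcd_eq_gcd_ab q' r'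
    rw [hco] at h
    exact_mod_cast h.symm
  have keya : ∀ a b : ℤ, a = (q' : ℤ) * (s * a + t * b) + t * (a * r' - b * q') := by
    intro a b
    linear_combination -a * hst
  have keyb : ∀ a b : ℤ, b = (r' : ℤ) * (s * a + t * b) - s * (a * r' - b * q') := by
    intro a b
    linear_combination -b * hst
  set T := (((Finset.Icc 1 q) ×ˢ (Finset.Icc 1 r)).filter (fun ab : ℕ × ℕ =>
      Nat.gcd ab.1 q = 1 ∧ Nat.gcd ab.2 r = 1 ∧
      ((ab.1 * r : ℕ) : ℝ) - ((ab.2 * q : ℕ) : ℝ) ∈ Set.Icc X (X + 2 * Δ * q * r))) with hT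
  set f : ℕ × ℕ → ℤ := fun ab => (ab.1 : ℤ) * r' - (ab.2 : ℤ) * q' with hf
  -- basic facts about members of T
  have hmem : ∀ ab : ℕ × ℕ, ab ∈ T →
      1 ≤ ab.1 ∧ ab.1 ≤ q ∧ 1 ≤ ab.2 ∧ ab.2 ≤ r ∧ Nat.gcd ab.1 q = 1 ∧ Nat.gcd ab.2 r = 1 ∧
        X ≤ ((ab.1 * r : ℕ) : ℝ) - ((ab.2 * q : ℕ) : ℝ) ∧
        ((ab.1 * r : ℕ) : ℝ) - ((ab.2 * q : ℕ) : ℝ) ≤ X + 2 * Δ * q * r := by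
    intro ab hab
    rw [hT, Finset.mem_filter, Finset.mem_product, Finset.mem_Icc, Finset.mem_Icc] at hab
    obtain ⟨⟨⟨h1, h2⟩, h3, h4⟩, h5, h6, h7⟩ := hab
    exact ⟨h1, h2, h3, h4, h5, h6, h7.1, h7.2⟩
  -- Step A : fiber bound
  have hA : T.card ≤ g.totient * (T.image f).card := by
    apply Finset.card_le_mul_card_image
    intro c hc
    rw [← Nat.card_eq_finsetCard]
    set P : ZMod g → Prop := fun w =>
      IsUnit (((q' : ℤ) : ZMod g) * w + ((t * c : ℤ) : ZMod g)) ∧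
      IsUnit (((r' : ℤ) : ZMod g) * w + ((-(s * c) : ℤ) : ZMod g)) with hP
    have hstep : ∀ ab : ℕ × ℕ, ab ∈ T.filter (fun x => f x = c) →
        P (((s * ab.1 + t * ab.2 : ℤ) : ZMod g)) := by
      intro ab hab
      rw [Finset.mem_filter] at hab
      obtain ⟨habT, habc⟩ := hab
      obtain ⟨_, _, _, _, hga, hgb, _, _⟩ := hmem ab habT
      have hfa : (ab.1 : ℤ) * r' - (ab.2 : ℤ) * q' = c := habc
      have hua : IsUnit ((ab.1 : ℤ) : ZMod g) := by
        have : (ab.1).Coprime g := Nat.Coprime.coprime_dvd_right hgq hga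
        have h := (ZMod.isUnit_iff_coprime ab.1 g).2 this
        exact_mod_cast h
      have hub : IsUnit ((ab.2 : ℤ) : ZMod g) := by
        have : (ab.2).Coprime g := Nat.Coprime.coprime_dvd_right hgr hgb
        have h := (ZMod.isUnit_iff_coprime ab.2 g).2 this
        exact_mod_cast h
      constructor
      · have hida : (ab.1 : ℤ) = (q' : ℤ) * (s * ab.1 + t * ab.2) + t * c := by
          rw [← hfa]; exact keya _ _
        have e1 : (((q' : ℤ) : ZMod g) * ((s * ab.1 + t * ab.2 : ℤ) : ZMod g)
            + ((t * c : ℤ) : ZMod g))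
            = (((q' : ℤ) * (s * ab.1 + t * ab.2) + t * c : ℤ) : ZMod g) := by
          push_cast; ring
        rw [e1, ← hida]; exact hua
      · have hidb : (ab.2 : ℤ) = (r' : ℤ) * (s * ab.1 + t * ab.2) + (-(s * c)) := by
          rw [← hfa]; linear_combination keyb (ab.1 : ℤ) (ab.2 : ℤ)
        have e2 : (((r' : ℤ) : ZMod g) * ((s * ab.1 + t * ab.2 : ℤ) : ZMod g)
            + ((-(s * c) : ℤ) : ZMod g))
            = (((r' : ℤ) * (s * ab.1 + t * ab.2) + (-(s * c)) : ℤ) : ZMod g) := by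
          push_cast; ring
        rw [e2, ← hidb]; exact hub
    set F : {x // x ∈ T.filter (fun x => f x = c)} → {w : ZMod g // P w} :=
      fun x => ⟨((s * x.1.1 + t * x.1.2 : ℤ) : ZMod g), hstep x.1 x.2⟩ with hF
    have hFinj : Function.Injective F := by
      intro x y hxy
      have hwe : ((s * x.1.1 + t * x.1.2 : ℤ) : ZMod g) = ((s * y.1.1 + t * y.1.2 : ℤ) : ZMod g) := by
        have := congrArg Subtype.val hxy
        simpa [hF] using this
      rw [ZMod.intCast_eq_intCast_iff] at hwe
      have hdvd : (g : ℤ) ∣ (s * y.1.1 + t * y.1.2) - (s * x.1.1 + t * x.1.2) := hwe.dvd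
      obtain ⟨k, hk⟩ := hdvd
      have hxc : (x.1.1 : ℤ) * r' - (x.1.2 : ℤ) * q' = c := (Finset.mem_filter.1 x.2).2
      have hyc : (y.1.1 : ℤ) * r' - (y.1.2 : ℤ) * q' = c := (Finset.mem_filter.1 y.2).2
      have hxa := keya (x.1.1 : ℤ) (x.1.2 : ℤ)
      have hya := keya (y.1.1 : ℤ) (y.1.2 : ℤ)
      rw [hxc] at hxa
      rw [hyc] at hya
      have hdiff : (x.1.1 : ℤ) - (y.1.1 : ℤ) = (q : ℤ) * (-k) := by
        have : (x.1.1 : ℤ) - (y.1.1 : ℤ)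
            = (q' : ℤ) * ((s * x.1.1 + t * x.1.2) - (s * y.1.1 + t * y.1.2)) := by
          linear_combination hxa - hya
        rw [this]
        rw [show (s * (x.1.1 : ℤ) + t * x.1.2) - (s * y.1.1 + t * y.1.2)
            = -((s * (y.1.1 : ℤ) + t * y.1.2) - (s * x.1.1 + t * x.1.2)) by ring, hk]
        rw [← hq'z]; ring
      have hxT := hmem x.1 (Finset.mem_filter.1 x.2).1
      have hyT := hmem y.1 (Finset.mem_filter.1 y.2).1
      have haeq : (x.1.1 : ℤ) = y.1.1 := by
        have hz : (x.1.1 : ℤ) - y.1.1 = 0 := by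
          refine Int.eq_zero_of_abs_lt_dvd ⟨-k, hdiff⟩ ?_
          have h1 : (1 : ℤ) ≤ x.1.1 := by exact_mod_cast hxT.1
          have h2 : (x.1.1 : ℤ) ≤ q := by exact_mod_cast hxT.2.1
          have h3 : (1 : ℤ) ≤ y.1.1 := by exact_mod_cast hyT.1
          have h4 : (y.1.1 : ℤ) ≤ q := by exact_mod_cast hyT.2.1
          rw [abs_lt]; omega
        omega
      have hbeq : (x.1.2 : ℤ) = y.1.2 := by
        have hq'ne : (q' : ℤ) ≠ 0 := by exact_mod_cast hq'0.ne'
        have : (x.1.2 : ℤ) * q' = (y.1.2 : ℤ) * q' := by linear_combination hyc - hxc + r' * haeq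
        exact mul_right_cancel₀ hq'ne this
      apply Subtype.ext
      apply Prod.ext
      · exact_mod_cast haeq
      · exact_mod_cast hbeq
    calc Nat.card {x // x ∈ T.filter (fun x => f x = c)}
        ≤ Nat.card {w : ZMod g // P w} := Nat.card_le_card_of_injective F hFinj
      _ ≤ g.totient := crux g (q' : ℤ) (t * c) (r' : ℤ) (-(s * c))
          (Nat.isCoprime_iff_coprime.2 hco) hg0.ne'
  -- Step B : image bound
  have hgR : (0 : ℝ) < g := by exact_mod_cast hg0
  have hB : T.image f ⊆ Finset.Icc ⌈X / (g : ℝ)⌉ ⌊(X + 2 * Δ * q * r) / (g : ℝ)⌋ := by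
    intro c hc
    obtain ⟨ab, hab, rfl⟩ := Finset.mem_image.1 hc
    obtain ⟨_, _, _, _, _, _, hlo, hhi⟩ := hmem ab hab
    have hgc : ((g : ℤ) * f ab : ℤ) = (ab.1 : ℤ) * r - (ab.2 : ℤ) * q := by
      rw [hf]
      linear_combination (ab.1 : ℤ) * hr'z - (ab.2 : ℤ) * hq'z
    have hgcR : (g : ℝ) * ((f ab : ℤ) : ℝ) = ((ab.1 * r : ℕ) : ℝ) - ((ab.2 * q : ℕ) : ℝ) := by
      have := congrArg (fun z : ℤ => (z : ℝ)) hgc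
      push_cast at this ⊢
      linarith [this]
    rw [Finset.mem_Icc]
    constructor
    · rw [Int.ceil_le]
      rw [div_le_iff₀ hgR]
      rw [mul_comm]
      rw [hgcR]
      exact hlo
    · rw [Int.le_floor]
      rw [le_div_iff₀ hgR]
      rw [mul_comm]
      rw [hgcR]
      exact hhi
  have hL0 : (0 : ℝ) < 2 * Δ * q * r := by
    have hqR : (0 : ℝ) < q := by exact_mod_cast hq0
    have hrR : (0 : ℝ) < r := by exact_mod_cast hr
    positivity
  have hBcard : ((T.image f).card : ℝ) ≤ 2 * Δ * q * r / (g : ℝ) + 1 := by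
    have h1 : (T.image f).card ≤ (Finset.Icc ⌈X / (g : ℝ)⌉ ⌊(X + 2 * Δ * q * r) / (g : ℝ)⌋).card :=
      Finset.card_le_card hB
    have h2 : ((Finset.Icc ⌈X / (g : ℝ)⌉ ⌊(X + 2 * Δ * q * r) / (g : ℝ)⌋).card : ℝ)
        ≤ 2 * Δ * q * r / (g : ℝ) + 1 := by
      rw [Int.card_Icc]
      have hd : (X + 2 * Δ * q * r) / (g : ℝ) - X / (g : ℝ) = 2 * Δ * q * r / (g : ℝ) := by
        field_simp
        ring
      have hd0 : (0 : ℝ) ≤ 2 * Δ * q * r / (g : ℝ) := le_of_lt (by positivity)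
      rcases le_or_gt (⌊(X + 2 * Δ * q * r) / (g : ℝ)⌋ + 1 - ⌈X / (g : ℝ)⌉) 0 with h | h
      · rw [Int.toNat_of_nonpos h]
        simpa using by linarith
      · have hcast : (((⌊(X + 2 * Δ * q * r) / (g : ℝ)⌋ + 1 - ⌈X / (g : ℝ)⌉).toNat : ℕ) : ℝ)
            = ((⌊(X + 2 * Δ * q * r) / (g : ℝ)⌋ : ℝ) + 1 - (⌈X / (g : ℝ)⌉ : ℝ)) := by
          rw [← Int.cast_natCast (R := ℝ), Int.toNat_of_nonneg h.le]; push_cast; ring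
        rw [hcast]
        have hfl : ((⌊(X + 2 * Δ * q * r) / (g : ℝ)⌋ : ℤ) : ℝ) ≤ (X + 2 * Δ * q * r) / (g : ℝ) :=
          Int.floor_le _
        have hce : X / (g : ℝ) ≤ ((⌈X / (g : ℝ)⌉ : ℤ) : ℝ) := Int.le_ceil _
        linarith
    calc ((T.image f).card : ℝ) ≤ ((Finset.Icc ⌈X / (g : ℝ)⌉ ⌊(X + 2 * Δ * q * r) / (g : ℝ)⌋).card : ℝ) := by
          exact_mod_cast h1
      _ ≤ 2 * Δ * q * r / (g : ℝ) + 1 := h2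
  -- combine
  have htot0 : (0 : ℝ) ≤ (g.totient : ℝ) := by positivity
  calc (T.card : ℝ) ≤ (g.totient : ℝ) * ((T.image f).card : ℝ) := by exact_mod_cast hA
    _ ≤ (g.totient : ℝ) * (2 * Δ * q * r / (g : ℝ) + 1) := by
        exact mul_le_mul_of_nonneg_left hBcard htot0
    _ = (2 * Δ * q * r / (g : ℝ) + 1) * (g.totient : ℝ) := by ring
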